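/- Let μ ≥ 1 be an integer and let n = k·2^{μ+1} − 1 for some integer k ≥ 1. Then f_{2^μ, n}(−1) = 0; equivalently, z + 1 divides the polynomial f_{2^μ, n}(z). -/

import Mathlib

open Polynomial

lemma parity_choose_pow (μ j : ℕ) : j.choose (2 ^ μ) % 2 = j / 2 ^ μ % 2 := by
  induction μ generalizing j with
  | zero => simp [Nat.choose_one_right]
  | succ μ ih =>
    have h := @Choose.choose_modEq_choose_mod_mul_choose_div_nat j (2 ^ (μ + 1)) 2 ⟨Nat.prime_two⟩
    have h2 : 2 ^ (μ + 1) % 2 = 0 := by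
      simp [pow_succ, Nat.mul_mod]
    have h3 : 2 ^ (μ + 1) / 2 = 2 ^ μ := by
      rw [pow_succ]; exact Nat.mul_div_cancel _ (by norm_num)
    rw [h2, h3, Nat.choose_zero_right, one_mul] at h
    unfold Nat.ModEq at h
    rw [h, ih, Nat.div_div_eq_div_mul, ← pow_succ']

lemma key_div (m k j : ℕ) (hm : 0 < m) (hj : j < k * (2 * m)) :
    (k * (2 * m) - 1 - j) / m % 2 + j / m % 2 = 1 := by
  set q := j / (2 * m) with hq
  set r := j % (2 * m) with hr
  have hr2 : r < 2 * m := Nat.mod_lt _ (by omega)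
  have hjqr : j = q * (2 * m) + r := by
    rw [hq, hr, Nat.mul_comm]; exact (Nat.div_add_mod j (2 * m)).symm
  have hqk : q < k := by
    by_contra h
    push_neg at h
    have : k * (2 * m) ≤ q * (2 * m) := Nat.mul_le_mul_right _ h
    omega
  have hmul : q * (2 * m) + 2 * m ≤ k * (2 * m) := by
    calc q * (2 * m) + 2 * m = (q + 1) * (2 * m) := by ring
    _ ≤ k * (2 * m) := Nat.mul_le_mul_right _ hqk
  have hsub : k * (2 * m) - 1 - j = (2 * m - 1 - r) + (k - 1 - q) * (2 * m) := by
    have hd : (k - 1 - q) * (2 * m) = k * (2 * m) - 2 * m - q * (2 * m) := by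
      rw [Nat.sub_mul, Nat.sub_mul, one_mul]
    omega
  have hjm : j / m = r / m + q * 2 := by
    rw [hjqr, show q * (2 * m) + r = r + q * 2 * m by ring, Nat.add_mul_div_right _ _ hm]
  have hnm : (k * (2 * m) - 1 - j) / m = (2 * m - 1 - r) / m + (k - 1 - q) * 2 := by
    rw [hsub, show 2 * m - 1 - r + (k - 1 - q) * (2 * m) = (2 * m - 1 - r) + (k - 1 - q) * 2 * m by ring, Nat.add_mul_div_right _ _ hm]
  rw [hjm, hnm, Nat.add_mul_mod_self_right, Nat.add_mul_mod_self_right]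
  rcases lt_or_ge r m with h | h
  · have h1 : (2 * m - 1 - r) / m = 1 := by
      apply Nat.div_eq_of_lt_le <;> omega
    have h2 : r / m = 0 := Nat.div_eq_of_lt h
    simp [h1, h2]
  · have h1 : (2 * m - 1 - r) / m = 0 := Nat.div_eq_of_lt (by omega)
    have h2 : r / m = 1 := by
      apply Nat.div_eq_of_lt_le <;> omega
    simp [h1, h2]

theorem stmt_12 (μ k : ℕ) (hμ : 1 ≤ μ) (hk : 1 ≤ k) (n : ℕ)
    (hn : n = k * 2 ^ (μ + 1) - 1) :
    (∑ j ∈ Finset.range (n + 1), (n.choose j : ℤ) * (-1 : ℤ) ^ (j.choose (2 ^ μ))) = 0 ∧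
    (Polynomial.X + 1 : ℤ[X]) ∣
      ∑ j ∈ Finset.range (n + 1),
        Polynomial.C ((n.choose j : ℤ)) * Polynomial.X ^ (j.choose (2 ^ μ)) := by
  have hm : 0 < 2 ^ μ := Nat.pow_pos (by norm_num)
  have hpow : 2 ^ (μ + 1) = 2 * 2 ^ μ := by rw [pow_succ]; ring
  have hsum : (∑ j ∈ Finset.range (n + 1), (n.choose j : ℤ) * (-1 : ℤ) ^ (j.choose (2 ^ μ))) = 0 := by
    set S := ∑ j ∈ Finset.range (n + 1), (n.choose j : ℤ) * (-1 : ℤ) ^ (j.choose (2 ^ μ)) with hS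
    have hrefl : S = ∑ j ∈ Finset.range (n + 1),
        (n.choose (n - j) : ℤ) * (-1 : ℤ) ^ ((n - j).choose (2 ^ μ)) := by
      rw [hS, ← Finset.sum_range_reflect]
      apply Finset.sum_congr rfl
      intro j hj
      simp only [Nat.add_sub_cancel]
    have hterm : ∀ j ∈ Finset.range (n + 1),
        (n.choose (n - j) : ℤ) * (-1 : ℤ) ^ ((n - j).choose (2 ^ μ)) =
        -((n.choose j : ℤ) * (-1 : ℤ) ^ (j.choose (2 ^ μ))) := by
      intro j hj
      rw [Finset.mem_range] at hj
      have hjn : j ≤ n := Nat.lt_succ_iff.mp hj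
      rw [Nat.choose_symm hjn]
      have hkk : k * 2 ^ (μ + 1) = k * (2 * 2 ^ μ) := by rw [hpow]
      have hpos : 0 < k * 2 ^ (μ + 1) := by positivity
      have hjlt : j < k * (2 * 2 ^ μ) := by omega
      have hkey := key_div (2 ^ μ) k j hm hjlt
      have hnj : n - j = k * (2 * 2 ^ μ) - 1 - j := by omega
      rw [hnj]
      have p1 := parity_choose_pow μ (k * (2 * 2 ^ μ) - 1 - j)
      have p2 := parity_choose_pow μ j
      have hodd : (k * (2 * 2 ^ μ) - 1 - j).choose (2 ^ μ) % 2 + j.choose (2 ^ μ) % 2 = 1 := by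
        rw [p1, p2]; exact hkey
      rcases Nat.even_or_odd (j.choose (2 ^ μ)) with he | ho
      · have ho' : Odd ((k * (2 * 2 ^ μ) - 1 - j).choose (2 ^ μ)) := by
          rcases he with ⟨c, hc⟩
          rw [Nat.odd_iff]
          omega
        rw [he.neg_one_pow, ho'.neg_one_pow]
        ring
      · have he' : Even ((k * (2 * 2 ^ μ) - 1 - j).choose (2 ^ μ)) := by
          rw [Nat.odd_iff] at ho
          rw [Nat.even_iff]
          omega
        rw [ho.neg_one_pow, he'.neg_one_pow]
        ring
    rw [Finset.sum_congr rfl hterm, Finset.sum_neg_distrib, ← hS] at hrefl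
    linarith
  refine ⟨hsum, ?_⟩
  have : (X + 1 : ℤ[X]) = X - C (-1) := by simp
  rw [this, dvd_iff_isRoot]
  simp only [IsRoot, eval_finset_sum, eval_mul, eval_C, eval_pow, eval_X]
  exact hsum
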